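/- If W(t) solves the assignment flow Ẇ_i = R_{W_i}[S_i(W)] with W(0) = 𝟙_W (barycenter in each row), then S̄(t) := S(W(t)) solves the S-flow S̄̇_i = R_{S̄_i}[∑_{j∈N_i} ω_{ij} S̄_j] with S̄(0) = S(𝟙_W); conversely W is recovered from Ẇ = R_W[S̄]. Hence the assignment flow is equivalent to the coupled system Ẇ = R_W[S̄], S̄̇ = R_{S̄}[Ω S̄]. -/

import Mathlib

open Finset Real

/-- The open probability simplex in ℝ^c. -/
def simplexS (c : ℕ) : Set (Fin c → ℝ) := {p | (∀ i, 0 < p i) ∧ ∑ i, p i = 1}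

/-- Tangent space: vectors with zero coordinate sum. -/
def T0 (c : ℕ) : Set (Fin c → ℝ) := {v | ∑ i, v i = 0}

/-- Orthogonal projection onto T0. -/
noncomputable def proj0 {c : ℕ} (u : Fin c → ℝ) : Fin c → ℝ :=
  fun i => u i - (∑ j, u j) / c

/-- exp_p(v) = (p ⊙ e^v)/⟨p, e^v⟩. -/
noncomputable def expMap {c : ℕ} (p v : Fin c → ℝ) : Fin c → ℝ :=
  fun i => p i * Real.exp (v i) / ∑ j, p j * Real.exp (v j)

/-- Inverse of exp_p restricted to T0: exp_p⁻¹(q) = Π₀[log(q/p)]. -/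
noncomputable def expInv {c : ℕ} (p q : Fin c → ℝ) : Fin c → ℝ :=
  proj0 (fun i => Real.log (q i / p i))

/-- R_q[u] = q ⊙ u − ⟨q,u⟩ q. -/
def Rmap {c : ℕ} (q u : Fin c → ℝ) : Fin c → ℝ :=
  fun i => q i * u i - (∑ j, q j * u j) * q i

/-- Barycenter 𝟙ₛ = (1/c,…,1/c). -/
noncomputable def bary (c : ℕ) : Fin c → ℝ := fun _ => 1 / c

/-- The i-th component of the similarity map, in the form
S_i(W) = exp_{𝟙ₛ}( ∑_{j∈N_i} ω_{ij}(exp_{𝟙ₛ}⁻¹(W_j) − D_j/ρ) ). -/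
noncomputable def Sim {n c : ℕ} (N : Fin n → Finset (Fin n)) (ω : Fin n → Fin n → ℝ)
    (D : Fin n → Fin c → ℝ) (ρ : ℝ) (W : Fin n → Fin c → ℝ) (i : Fin n) : Fin c → ℝ :=
  expMap (bary c) (∑ j ∈ N i, ω i j • (expInv (bary c) (W j) - ρ⁻¹ • D j))


section aux
variable {c : ℕ}

lemma bary_pos (hc : 0 < c) (k : Fin c) : (0:ℝ) < bary c k := by
  have : (0:ℝ) < (c:ℝ) := Nat.cast_pos.2 hc
  simp only [bary]
  positivity

lemma expMap_bary_eq (hc : 0 < c) (v : Fin c → ℝ) (k : Fin c) :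
    expMap (bary c) v k = Real.exp (v k) / ∑ m, Real.exp (v m) := by
  have hcR : (0:ℝ) < (c:ℝ) := Nat.cast_pos.2 hc
  unfold expMap bary
  rw [← Finset.mul_sum, mul_div_mul_left]
  positivity

lemma sum_expMap_bary (hc : 0 < c) (v : Fin c → ℝ) :
    ∑ k, expMap (bary c) v k = 1 := by
  have : Nonempty (Fin c) := ⟨⟨0, hc⟩⟩
  have hZ : 0 < ∑ m, Real.exp (v m) :=
    Finset.sum_pos (fun m _ => Real.exp_pos _) Finset.univ_nonempty
  simp only [expMap_bary_eq hc]
  rw [← Finset.sum_div, div_self hZ.ne']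

lemma hasDerivAt_expMap (hc : 0 < c) {v : ℝ → Fin c → ℝ} {u : Fin c → ℝ} {t : ℝ}
    (hv : ∀ k, HasDerivAt (fun s => v s k) (u k) t) (k : Fin c) :
    HasDerivAt (fun s => expMap (bary c) (v s) k)
      (Rmap (expMap (bary c) (v t)) u k) t := by
  have : Nonempty (Fin c) := ⟨⟨0, hc⟩⟩
  have hZ : 0 < ∑ m, Real.exp (v t m) :=
    Finset.sum_pos (fun m _ => Real.exp_pos _) Finset.univ_nonempty
  have hnum : HasDerivAt (fun s => Real.exp (v s k)) (Real.exp (v t k) * u k) t := (hv k).exp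
  have hden : HasDerivAt (fun s => ∑ m, Real.exp (v s m)) (∑ m, Real.exp (v t m) * u m) t :=
    HasDerivAt.fun_sum fun m _ => (hv m).exp
  have h := hnum.div hden hZ.ne'
  have heq : (fun s => expMap (bary c) (v s) k)
      = fun s => Real.exp (v s k) / ∑ m, Real.exp (v s m) :=
    funext fun s => expMap_bary_eq hc _ k
  rw [heq]
  convert h using 1
  · rfl
  · rfl
  · rfl
  simp only [Rmap, expMap_bary_eq hc, div_mul_eq_mul_div, ← Finset.sum_div]
  field_simp

end aux

theorem stmt15 {n c : ℕ} (N : Fin n → Finset (Fin n)) (ω : Fin n → Fin n → ℝ)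
    (D : Fin n → Fin c → ℝ) (ρ : ℝ) (hρ : 0 < ρ)
    (hself : ∀ i, i ∈ N i)
    (hωpos : ∀ i, ∀ j ∈ N i, 0 < ω i j)
    (hωsum : ∀ i, ∑ j ∈ N i, ω i j = 1)
    (W : ℝ → Fin n → Fin c → ℝ)
    (hWs : ∀ t j, W t j ∈ simplexS c)
    (h0 : W 0 = fun _ => bary c)
    (hflow : ∀ t i, HasDerivAt (fun s => W s i) (Rmap (W t i) (Sim N ω D ρ (W t) i)) t) :
    -- S̄(t) := S(W(t)) solves the S-flow with the stated initial condition,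
    -- and W is recovered from Ẇ = R_W[S̄]:
    (∀ t i, HasDerivAt (fun s => Sim N ω D ρ (W s) i)
        (Rmap (Sim N ω D ρ (W t) i) (∑ j ∈ N i, ω i j • Sim N ω D ρ (W t) j)) t) ∧
    (Sim N ω D ρ (W 0) = Sim N ω D ρ (fun _ => bary c)) ∧
    (∀ t i, HasDerivAt (fun s => W s i) (Rmap (W t i) (Sim N ω D ρ (W t) i)) t) := by
  refine ⟨?_, by rw [h0], hflow⟩
  intro t i
  have hc : 0 < c := by
    rcases Nat.eq_zero_or_pos c with h | h
    · exfalso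
      have h1 := (hWs 0 i).2
      subst h
      simpa using h1
    · exact h
  have hcR : (0:ℝ) < (c:ℝ) := Nat.cast_pos.2 hc
  set S : Fin n → Fin c → ℝ := Sim N ω D ρ (W t) with hS
  have hsumS : ∀ j, ∑ m, S j m = 1 := fun j => sum_expMap_bary hc _
  -- derivative of expInv components
  have hlog : ∀ j k, HasDerivAt (fun s => expInv (bary c) (W s j) k) (S j k - 1/c) t := by
    intro j k
    have hg : ∀ m, HasDerivAt (fun s => Real.log (W s j m / bary c m))
        (S j m - ∑ l, W t j l * S j l) t := by
      intro m
      have hWpos : ∀ s, 0 < W s j m := fun s => (hWs s j).1 m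
      have hWcomp : HasDerivAt (fun s => W s j m) (Rmap (W t j) (S j) m) t :=
        hasDerivAt_pi.1 (hflow t j) m
      have h1 : HasDerivAt (fun s => Real.log (W s j m)) (Rmap (W t j) (S j) m / W t j m) t :=
        hWcomp.log (hWpos t).ne'
      have heq : (fun s => Real.log (W s j m / bary c m))
          = fun s => Real.log (W s j m) - Real.log (bary c m) :=
        funext fun s => Real.log_div (hWpos s).ne' (bary_pos hc m).ne'
      rw [heq]
      convert h1.sub_const _ using 1
      · rfl
      · rfl
      unfold Rmap
      field_simp [(hWpos t).ne']
    have heq : (fun s => expInv (bary c) (W s j) k)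
        = fun s => Real.log (W s j k / bary c k)
            - (∑ m, Real.log (W s j m / bary c m)) / c := by
      funext s; simp [expInv, proj0]
    rw [heq]
    have h2 : HasDerivAt (fun s => ∑ m, Real.log (W s j m / bary c m))
        (∑ m, (S j m - ∑ l, W t j l * S j l)) t := HasDerivAt.fun_sum fun m _ => hg m
    have h3 := (hg k).sub (h2.div_const (c:ℝ))
    convert h3 using 1
    · rfl
    · rfl
    · rfl
    rw [Finset.sum_sub_distrib, hsumS j, Finset.sum_const, Finset.card_univ,
      Fintype.card_fin, nsmul_eq_mul]
    field_simp
    ring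
  -- derivative of the argument of expMap
  have hv : ∀ k, HasDerivAt
      (fun s => (∑ j ∈ N i, ω i j • (expInv (bary c) (W s j) - ρ⁻¹ • D j)) k)
      ((fun k => (∑ j ∈ N i, ω i j • S j) k - 1/c) k) t := by
    intro k
    have h1 : ∀ s, (∑ j ∈ N i, ω i j • (expInv (bary c) (W s j) - ρ⁻¹ • D j)) k
        = ∑ j ∈ N i, ω i j * (expInv (bary c) (W s j) k - ρ⁻¹ * D j k) := by
      intro s
      simp [Finset.sum_apply, Pi.smul_apply, Pi.sub_apply, smul_eq_mul]
    simp only [h1]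
    have h2 : HasDerivAt (fun s => ∑ j ∈ N i, ω i j * (expInv (bary c) (W s j) k - ρ⁻¹ * D j k))
        (∑ j ∈ N i, ω i j * (S j k - 1/c)) t :=
      HasDerivAt.fun_sum fun j _ => (((hlog j k).sub_const _).const_mul _)
    convert h2 using 1
    simp only [Finset.sum_apply, Pi.smul_apply, smul_eq_mul, mul_sub,
      Finset.sum_sub_distrib, ← Finset.sum_mul, hωsum i]
    ring
  have h := hasDerivAt_expMap hc hv
  rw [hasDerivAt_pi]
  intro k
  have hk := h k
  have hfun : (fun s => expMap (bary c)
      (∑ j ∈ N i, ω i j • (expInv (bary c) (W s j) - ρ⁻¹ • D j)) k)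
      = fun s => Sim N ω D ρ (W s) i k := rfl
  have hSi : expMap (bary c)
      (∑ j ∈ N i, ω i j • (expInv (bary c) (W t j) - ρ⁻¹ • D j)) = S i := rfl
  rw [hfun, hSi] at hk
  convert hk using 1
  · rfl
  · rfl
  simp only [Rmap, Finset.sum_apply, Pi.smul_apply, smul_eq_mul, mul_sub,
    Finset.sum_sub_distrib, Finset.sum_mul, ← Finset.mul_sum]
  have h1 : ∑ m, S i m * (1/(c:ℝ)) = 1/(c:ℝ) := by
    rw [← Finset.sum_mul, hsumS i, one_mul]
  rw [h1, ← Finset.sum_mul]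
  ring
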